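/- Let H be the diamond graph K_{1,1,2}, W a graphon (measurable symmetric function [0,1]^2 → [0,1]), and U = 2W - 1. Then |t_{K_3^+}(U)| ≤ sqrt(t_{K_{1,2}}(U) · t_{C_4}(U)), where K_3^+ denotes a triangle with a pendant edge, K_{1,2} is the path with two edges, and C_4 is the 4-cycle. -/

import Mathlib

open MeasureTheory

/-- Homomorphism density of a single edge `K₂`. -/
noncomputable def tK2 (U : unitInterval → unitInterval → ℝ) : ℝ :=
  ∫ x : Fin 2 → unitInterval, U (x 0) (x 1)

/-- Homomorphism density of the cherry/path `K_{1,2}`. -/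
noncomputable def tP3 (U : unitInterval → unitInterval → ℝ) : ℝ :=
  ∫ x : Fin 3 → unitInterval, U (x 0) (x 1) * U (x 1) (x 2)

/-- Homomorphism density of the triangle `K₃`. -/
noncomputable def tK3 (U : unitInterval → unitInterval → ℝ) : ℝ :=
  ∫ x : Fin 3 → unitInterval, U (x 0) (x 1) * U (x 1) (x 2) * U (x 2) (x 0)

/-- Homomorphism density of the 4-cycle `C₄`. -/
noncomputable def tC4 (U : unitInterval → unitInterval → ℝ) : ℝ :=
  ∫ x : Fin 4 → unitInterval, U (x 0) (x 1) * U (x 1) (x 2) * U (x 2) (x 3) * U (x 3) (x 0)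

/-- Homomorphism density of the triangle with a pendant edge `K₃⁺`. -/
noncomputable def tK3p (U : unitInterval → unitInterval → ℝ) : ℝ :=
  ∫ x : Fin 4 → unitInterval, U (x 0) (x 1) * U (x 1) (x 2) * U (x 2) (x 0) * U (x 2) (x 3)

/-- Homomorphism density of the diamond `D = K_{1,1,2}`. -/
noncomputable def tD (U : unitInterval → unitInterval → ℝ) : ℝ :=
  ∫ x : Fin 4 → unitInterval,
    U (x 0) (x 1) * U (x 0) (x 2) * U (x 0) (x 3) * U (x 1) (x 2) * U (x 1) (x 3)

/-- Homomorphism density of the octahedron `K_{2,2,2}` (parts `{0,1},{2,3},{4,5}`). -/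
noncomputable def tK222 (U : unitInterval → unitInterval → ℝ) : ℝ :=
  ∫ x : Fin 6 → unitInterval,
    U (x 0) (x 2) * U (x 0) (x 3) * U (x 0) (x 4) * U (x 0) (x 5) *
    U (x 1) (x 2) * U (x 1) (x 3) * U (x 1) (x 4) * U (x 1) (x 5) *
    U (x 2) (x 4) * U (x 2) (x 5) * U (x 3) (x 4) * U (x 3) (x 5)

/-- `W` is a graphon: measurable, symmetric, with values in `[0,1]`. -/
def IsGraphon (W : unitInterval → unitInterval → ℝ) : Prop :=
  Measurable (fun p : unitInterval × unitInterval => W p.1 p.2) ∧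
    (∀ x y, W x y = W y x) ∧ (∀ x y, 0 ≤ W x y) ∧ (∀ x y, W x y ≤ 1)

/-- The complementary graphon `1 - W`. -/
def compl' (W : unitInterval → unitInterval → ℝ) : unitInterval → unitInterval → ℝ :=
  fun x y => 1 - W x y

namespace TK3PAux

abbrev II := unitInterval

/-- degree function -/
noncomputable def dd (U : II → II → ℝ) (a : II) : ℝ := ∫ t : II, U a t

/-- common-neighborhood (path of length 2) kernel -/
noncomputable def gg (U : II → II → ℝ) (a b : II) : ℝ := ∫ t : II, U t a * U t b

lemma intg {α : Type*} [MeasurableSpace α] {μ : Measure α} [IsFiniteMeasure μ]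
    {f : α → ℝ} (hf : AEStronglyMeasurable f μ) {C : ℝ} (hb : ∀ x, |f x| ≤ C) :
    Integrable f μ :=
  Integrable.mono' (integrable_const C) hf (ae_of_all _ fun x => by
    simpa [Real.norm_eq_abs] using hb x)

lemma abs_int_le {α : Type*} [MeasurableSpace α] {μ : Measure α} [IsProbabilityMeasure μ]
    {f : α → ℝ} (h : ∀ x, |f x| ≤ 1) : |∫ x, f x ∂μ| ≤ 1 := by
  have := norm_integral_le_of_norm_le_const (μ := μ) (f := f) (C := 1)
    (ae_of_all _ fun x => by simpa using h x)
  simpa using this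

lemma abs_mul_le_one {x y : ℝ} (hx : |x| ≤ 1) (hy : |y| ≤ 1) : |x * y| ≤ 1 := by
  rw [abs_mul]
  nlinarith [abs_nonneg x, abs_nonneg y]

lemma abs_sq_le_one {x : ℝ} (hx : |x| ≤ 1) : |x ^ 2| ≤ 1 := by
  rw [abs_pow]
  nlinarith [abs_nonneg x]

/-- Peel off the `i`-th coordinate of an integral over `Fin (n+1) → II`. -/
lemma peelAt {n : ℕ} (i : Fin (n+1)) (f : (Fin (n+1) → II) → ℝ)
    (hf : Measurable f) {C : ℝ} (hb : ∀ x, |f x| ≤ C) :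
    ∫ x, f x = ∫ a : II, ∫ y : Fin n → II, f (i.insertNth a y) := by
  have mp := (volume_preserving_piFinSuccAbove (fun _ : Fin (n+1) => II) i).symm
  rw [← mp.integral_comp (MeasurableEquiv.measurableEmbedding _) f, Measure.volume_eq_prod,
    integral_prod]
  · rfl
  · exact intg (hf.comp (MeasurableEquiv.measurable _)).aestronglyMeasurable (fun p => hb _)

lemma peel1 (h : II → ℝ) : ∫ z : Fin 1 → II, h (z 0) = ∫ c : II, h c := by
  have mp := volume_preserving_funUnique (Fin 1) II
  rw [← mp.integral_comp (MeasurableEquiv.measurableEmbedding _) h]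
  rfl

/-- Cauchy–Schwarz for bounded measurable functions on a probability space. -/
lemma cs {α : Type*} [MeasurableSpace α] {μ : Measure α} [IsProbabilityMeasure μ]
    {f g : α → ℝ} (hf : AEStronglyMeasurable f μ) (hg : AEStronglyMeasurable g μ)
    (hbf : ∀ x, |f x| ≤ 1) (hbg : ∀ x, |g x| ≤ 1) :
    |∫ x, f x * g x ∂μ| ≤ Real.sqrt ((∫ x, f x ^ 2 ∂μ) * (∫ x, g x ^ 2 ∂μ)) := by
  have hpq : Real.HolderConjugate 2 2 := Real.HolderConjugate.two_two
  have hmf : MemLp f (ENNReal.ofReal 2) μ :=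
    MemLp.of_bound hf 1 (ae_of_all _ fun x => by simpa [Real.norm_eq_abs] using hbf x)
  have hmg : MemLp g (ENNReal.ofReal 2) μ :=
    MemLp.of_bound hg 1 (ae_of_all _ fun x => by simpa [Real.norm_eq_abs] using hbg x)
  have key := integral_mul_norm_le_Lp_mul_Lq hpq hmf hmg
  have h1 : |∫ x, f x * g x ∂μ| ≤ ∫ x, ‖f x‖ * ‖g x‖ ∂μ := by
    simpa [Real.norm_eq_abs, abs_mul] using
      norm_integral_le_integral_norm (f := fun x => f x * g x) (μ := μ)
  have h2 : ∀ h : α → ℝ, (∫ x, ‖h x‖ ^ (2:ℝ) ∂μ) = ∫ x, h x ^ 2 ∂μ := by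
    intro h
    refine integral_congr_ae (ae_of_all _ fun x => ?_)
    show ‖h x‖ ^ (2:ℝ) = h x ^ 2
    rw [Real.norm_eq_abs, show (2:ℝ) = ((2:ℕ):ℝ) by norm_num, Real.rpow_natCast]
    exact sq_abs _
  rw [h2 f, h2 g] at key
  have hi : Real.sqrt ((∫ x, f x ^ 2 ∂μ) * (∫ x, g x ^ 2 ∂μ))
      = (∫ x, f x ^ 2 ∂μ) ^ (1/(2:ℝ)) * (∫ x, g x ^ 2 ∂μ) ^ (1/(2:ℝ)) := by
    rw [Real.sqrt_eq_rpow, Real.mul_rpow (integral_nonneg fun x => sq_nonneg _)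
      (integral_nonneg fun x => sq_nonneg _)]
  rw [hi]
  exact h1.trans key

end TK3PAux

open TK3PAux in
/-- For a graphon `W` and `U = 2W - 1`:
`|t_{K₃⁺}(U)| ≤ √(t_{K_{1,2}}(U) · t_{C₄}(U))`. -/
theorem tK3p_abs_le (W : unitInterval → unitInterval → ℝ) (hW : IsGraphon W)
    (U : unitInterval → unitInterval → ℝ) (hU : U = fun x y => 2 * W x y - 1) :
    |tK3p U| ≤ Real.sqrt (tP3 U * tC4 U) := by
  obtain ⟨hWm, hWs, hW0, hW1⟩ := hW
  have hUm : Measurable (fun p : II × II => U p.1 p.2) := by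
    subst hU; exact (measurable_const.mul hWm).sub measurable_const
  have hUs : ∀ x y, U x y = U y x := by
    subst hU; intro x y; simp [hWs x y]
  have hUb : ∀ x y, |U x y| ≤ 1 := by
    subst hU; intro x y
    have h0 := hW0 x y; have h1 := hW1 x y
    rw [abs_le]
    constructor
    · show -1 ≤ 2 * W x y - 1; linarith
    · show 2 * W x y - 1 ≤ 1; linarith
  clear hU hWm hWs hW0 hW1
  -- measurability and bounds for the auxiliary kernels
  have hdm : Measurable (dd U) := hUm.stronglyMeasurable.integral_prod_right'.measurable
  have hgm : Measurable fun p : II × II => gg U p.1 p.2 := by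
    have h : Measurable fun q : (II × II) × II => U q.2 q.1.1 * U q.2 q.1.2 := by fun_prop
    exact h.stronglyMeasurable.integral_prod_right'.measurable
  have hdb : ∀ a, |dd U a| ≤ 1 := fun a => abs_int_le (fun t => hUb a t)
  have hgb : ∀ a b, |gg U a b| ≤ 1 := fun a b =>
    abs_int_le (fun t => abs_mul_le_one (hUb t a) (hUb t b))
  -- degree identity
  have hdsymm : ∀ b : II, (∫ a : II, U a b) = dd U b := by
    intro b
    exact integral_congr_ae (ae_of_all _ fun a => hUs a b)
  -- ### tP3
  have eP3 : tP3 U = ∫ b : II, dd U b ^ 2 := by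
    have h1 : tP3 U = ∫ b : II, ∫ y : Fin 2 → II, U (y 0) b * U b (y 1) :=
      peelAt 1 (fun x : Fin 3 → II => U (x 0) (x 1) * U (x 1) (x 2))
        (by fun_prop) (fun x => abs_mul_le_one (hUb _ _) (hUb _ _))
    rw [h1]
    refine integral_congr_ae (ae_of_all _ fun b => ?_)
    beta_reduce
    have h2 : (∫ y : Fin 2 → II, U (y 0) b * U b (y 1))
        = ∫ a : II, ∫ z : Fin 1 → II, U a b * U b (z 0) :=
      peelAt 0 (fun y : Fin 2 → II => U (y 0) b * U b (y 1))
        (by fun_prop) (fun y => abs_mul_le_one (hUb _ _) (hUb _ _))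
    show _ = dd U b ^ 2
    rw [h2]
    have h3 : ∀ a : II, (∫ z : Fin 1 → II, U a b * U b (z 0)) = U a b * dd U b := by
      intro a
      rw [peel1 (fun c => U a b * U b c), integral_const_mul]
      rfl
    rw [integral_congr_ae (ae_of_all _ h3), integral_mul_const, hdsymm b, sq]
  -- ### tK3p
  have eK3p : tK3p U = ∫ b : II, ∫ c : II, (U b c * dd U c) * gg U b c := by
    have h1 : tK3p U = ∫ b : II, ∫ y : Fin 3 → II,
        U (y 0) b * U b (y 1) * U (y 1) (y 0) * U (y 1) (y 2) :=
      peelAt 1 (fun x : Fin 4 → II => U (x 0) (x 1) * U (x 1) (x 2) * U (x 2) (x 0) * U (x 2) (x 3))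
        (by fun_prop)
        (fun x => abs_mul_le_one (abs_mul_le_one (abs_mul_le_one (hUb _ _) (hUb _ _)) (hUb _ _)) (hUb _ _))
    rw [h1]
    refine integral_congr_ae (ae_of_all _ fun b => ?_)
    beta_reduce
    have h2 : (∫ y : Fin 3 → II, U (y 0) b * U b (y 1) * U (y 1) (y 0) * U (y 1) (y 2))
        = ∫ c : II, ∫ z : Fin 2 → II, U (z 0) b * U b c * U c (z 0) * U c (z 1) :=
      peelAt 1 (fun y : Fin 3 → II => U (y 0) b * U b (y 1) * U (y 1) (y 0) * U (y 1) (y 2))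
        (by fun_prop)
        (fun y => abs_mul_le_one (abs_mul_le_one (abs_mul_le_one (hUb _ _) (hUb _ _)) (hUb _ _)) (hUb _ _))
    show _ = ∫ c : II, (U b c * dd U c) * gg U b c
    rw [h2]
    refine integral_congr_ae (ae_of_all _ fun c => ?_)
    beta_reduce
    have h3 : (∫ z : Fin 2 → II, U (z 0) b * U b c * U c (z 0) * U c (z 1))
        = ∫ a : II, ∫ w : Fin 1 → II, U a b * U b c * U c a * U c (w 0) :=
      peelAt 0 (fun z : Fin 2 → II => U (z 0) b * U b c * U c (z 0) * U c (z 1))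
        (by fun_prop)
        (fun z => abs_mul_le_one (abs_mul_le_one (abs_mul_le_one (hUb _ _) (hUb _ _)) (hUb _ _)) (hUb _ _))
    show _ = (U b c * dd U c) * gg U b c
    rw [h3]
    have h4 : ∀ a : II, (∫ w : Fin 1 → II, U a b * U b c * U c a * U c (w 0))
        = (U b c * dd U c) * (U a b * U a c) := by
      intro a
      rw [peel1 (fun e => U a b * U b c * U c a * U c e), integral_const_mul]
      have : (∫ t : II, U c t) = dd U c := rfl
      rw [this, hUs c a]
      ring
    rw [integral_congr_ae (ae_of_all _ h4), integral_const_mul]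
    rfl
  -- ### tC4
  have eC4 : tC4 U = ∫ b : II, ∫ e : II, gg U b e ^ 2 := by
    have h1 : tC4 U = ∫ b : II, ∫ y : Fin 3 → II,
        U (y 0) b * U b (y 1) * U (y 1) (y 2) * U (y 2) (y 0) :=
      peelAt 1 (fun x : Fin 4 → II => U (x 0) (x 1) * U (x 1) (x 2) * U (x 2) (x 3) * U (x 3) (x 0))
        (by fun_prop)
        (fun x => abs_mul_le_one (abs_mul_le_one (abs_mul_le_one (hUb _ _) (hUb _ _)) (hUb _ _)) (hUb _ _))
    rw [h1]
    refine integral_congr_ae (ae_of_all _ fun b => ?_)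
    beta_reduce
    have h2 : (∫ y : Fin 3 → II, U (y 0) b * U b (y 1) * U (y 1) (y 2) * U (y 2) (y 0))
        = ∫ e : II, ∫ z : Fin 2 → II, U (z 0) b * U b (z 1) * U (z 1) e * U e (z 0) :=
      peelAt 2 (fun y : Fin 3 → II => U (y 0) b * U b (y 1) * U (y 1) (y 2) * U (y 2) (y 0))
        (by fun_prop)
        (fun y => abs_mul_le_one (abs_mul_le_one (abs_mul_le_one (hUb _ _) (hUb _ _)) (hUb _ _)) (hUb _ _))
    show _ = ∫ e : II, gg U b e ^ 2
    rw [h2]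
    refine integral_congr_ae (ae_of_all _ fun e => ?_)
    beta_reduce
    have h3 : (∫ z : Fin 2 → II, U (z 0) b * U b (z 1) * U (z 1) e * U e (z 0))
        = ∫ a : II, ∫ w : Fin 1 → II, U a b * U b (w 0) * U (w 0) e * U e a :=
      peelAt 0 (fun z : Fin 2 → II => U (z 0) b * U b (z 1) * U (z 1) e * U e (z 0))
        (by fun_prop)
        (fun z => abs_mul_le_one (abs_mul_le_one (abs_mul_le_one (hUb _ _) (hUb _ _)) (hUb _ _))  (hUb _ _))
    show _ = gg U b e ^ 2
    rw [h3]
    have h4 : ∀ a : II, (∫ w : Fin 1 → II, U a b * U b (w 0) * U (w 0) e * U e a)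
        = (U a b * U a e) * gg U b e := by
      intro a
      rw [peel1 (fun c => U a b * U b c * U c e * U e a)]
      have heq : ∀ c : II, U a b * U b c * U c e * U e a
          = (U a b * U e a) * (U c b * U c e) := by
        intro c
        rw [hUs b c]
        ring
      rw [integral_congr_ae (ae_of_all _ heq), integral_const_mul]
      have : (∫ t : II, U t b * U t e) = gg U b e := rfl
      rw [this, hUs e a]
    rw [integral_congr_ae (ae_of_all _ h4), integral_mul_const]
    have : (∫ a : II, U a b * U a e) = gg U b e := rfl
    rw [this, sq]
  -- ### assemble via Cauchy–Schwarz on II × II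
  set F : II × II → ℝ := fun p => U p.1 p.2 * dd U p.2 with hF
  set G : II × II → ℝ := fun p => gg U p.1 p.2 with hG
  have hFm : Measurable F := by fun_prop
  have hGm : Measurable G := hgm
  have hFb : ∀ p, |F p| ≤ 1 := fun p => abs_mul_le_one (hUb _ _) (hdb _)
  have hGb : ∀ p, |G p| ≤ 1 := fun p => hgb _ _
  have hK3p : tK3p U = ∫ p : II × II, F p * G p := by
    rw [eK3p, Measure.volume_eq_prod]
    exact (integral_prod _ (intg (hFm.mul hGm).aestronglyMeasurable
      (C := 1) (fun p => abs_mul_le_one (hFb p) (hGb p)))).symm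
  have hC4 : tC4 U = ∫ p : II × II, G p ^ 2 := by
    rw [eC4, Measure.volume_eq_prod]
    exact (integral_prod _ (intg (hGm.pow_const 2).aestronglyMeasurable
      (C := 1) (fun p => abs_sq_le_one (hGb p)))).symm
  have hF2 : (∫ p : II × II, F p ^ 2) ≤ tP3 U := by
    have hle : (∫ p : II × II, F p ^ 2) ≤ ∫ p : II × II, dd U p.2 ^ 2 := by
      refine integral_mono
        (intg (hFm.pow_const 2).aestronglyMeasurable (C := 1)
          (fun p => abs_sq_le_one (hFb p)))
        (intg (show Measurable fun p : II × II => dd U p.2 ^ 2 by fun_prop).aestronglyMeasurable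
          (C := 1) (fun p => abs_sq_le_one (hdb p.2)))
        (fun p => ?_)
      have h1 : U p.1 p.2 ^ 2 ≤ 1 := by nlinarith [abs_le.1 (hUb p.1 p.2)]
      calc F p ^ 2 = U p.1 p.2 ^ 2 * dd U p.2 ^ 2 := by rw [hF]; ring
        _ ≤ 1 * dd U p.2 ^ 2 := mul_le_mul_of_nonneg_right h1 (sq_nonneg _)
        _ = dd U p.2 ^ 2 := one_mul _
    refine hle.trans ?_
    rw [eP3, Measure.volume_eq_prod]
    rw [integral_prod (fun p : II × II => dd U p.2 ^ 2)
      (intg (show Measurable fun p : II × II => dd U p.2 ^ 2 by fun_prop).aestronglyMeasurable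
        (C := 1) (fun p => abs_sq_le_one (hdb p.2)))]
    simp
  have hcs := cs (μ := (volume : Measure (II × II))) hFm.aestronglyMeasurable hGm.aestronglyMeasurable hFb hGb
  rw [← hK3p] at hcs
  refine hcs.trans (Real.sqrt_le_sqrt ?_)
  have hC4nn : 0 ≤ tC4 U := by
    rw [hC4]; exact integral_nonneg fun p => sq_nonneg _
  rw [← hC4]
  exact mul_le_mul_of_nonneg_right hF2 (hC4 ▸ hC4nn)
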